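/- arXiv:1510.04931 — 2 statements merged into one kernel-verified Lean document; each statement's English description precedes it below -/
import Mathlib

section
/- (Dogmatic prior, core construction.) Let ξ be a CCS, π a policy, e⁰ ∈ E a percept with r(e⁰) = 0, and ε ∈ (0,1]. Let ν be the π-dogmatic environment for ξ and define ξ' := (1/2)·ν + (ε/2)·ξ. Then for every history h = ae_{<t} consistent with π with Γ_t > 0, ξ(e_{<t} ∣ a_{<t}) > 0 and V^π_ξ(h) > ε, the action α := π(h) is the unique ξ'-optimal action at h: V^*_{ξ'}(hα) > V^*_{ξ'}(hβ) for every β ∈ A with β ≠ α. -/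
open scoped Classical

/-- A history: a finite alternating sequence of action–percept pairs. -/
abbrev Hist (A E : Type*) := List (A × E)

/-- A policy maps histories to actions. -/
abbrev Policy (A E : Type*) := Hist A E → A

/-- A chronological conditional semimeasure (CCS, environment):
values in `[0,1]`, and the chronological semimeasure condition. -/
structure CCS (A E : Type*) [Fintype E] where
  val : Hist A E → ℝ
  nonneg : ∀ h, 0 ≤ val h
  le_one : ∀ h, val h ≤ 1
  chrono : ∀ (h : Hist A E) (a : A), (∑ e : E, val (h ++ [(a, e)])) ≤ val h

/-- `Gam γ t = Γ_t = ∑_{i ≥ t} γ_i`, the discount normalization factor. -/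
noncomputable def Gam (γ : ℕ → ℝ) (t : ℕ) : ℝ := ∑' i : ℕ, γ (t + i)

/-- Extend a history by a list of percepts, with actions chosen by the policy `π`. -/
def extendH {A E : Type*} (π : Policy A E) : Hist A E → List E → Hist A E
  | h, [] => h
  | h, e :: es => extendH π (h ++ [(π h, e)]) es

/-- The value `V^π_ν(ae_{<t})` of policy `π` in environment `ν` given history `h = ae_{<t}`
(with `t = h.length + 1`); `0` whenever `Γ_t ≤ 0` or `ν(e_{<t} ∣ a_{<t}) ≤ 0`. -/
noncomputable def V {A E : Type*} [Fintype E] (γ : ℕ → ℝ) (r : E → ℝ)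
    (π : Policy A E) (ν : CCS A E) (h : Hist A E) : ℝ :=
  if 0 < Gam γ (h.length + 1) ∧ 0 < ν.val h then
    (1 / (Gam γ (h.length + 1) * ν.val h)) *
      ∑' n : ℕ, γ (h.length + 1 + n) *
        ∑ es : Fin (n + 1) → E,
          r (es (Fin.last n)) * ν.val (extendH π h (List.ofFn es))
  else 0

/-- The value `V^π_ν(h a)` of a history ending in the action `a`:
the action at time `t` is `a`, and `π` is followed from time `t+1` on. -/
noncomputable def Vact {A E : Type*} [Fintype E] (γ : ℕ → ℝ) (r : E → ℝ)
    (π : Policy A E) (ν : CCS A E) (h : Hist A E) (a : A) : ℝ :=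
  V γ r (fun h' => if h' = h then a else π h') ν h

/-- The optimal value `V^*_ν(h) = sup_π V^π_ν(h)`. -/
noncomputable def VOpt {A E : Type*} [Fintype E] (γ : ℕ → ℝ) (r : E → ℝ)
    (ν : CCS A E) (h : Hist A E) : ℝ :=
  ⨆ π : Policy A E, V γ r π ν h

/-- The optimal value `V^*_ν(h a)` of a history ending in an action. -/
noncomputable def VOptAct {A E : Type*} [Fintype E] (γ : ℕ → ℝ) (r : E → ℝ)
    (ν : CCS A E) (h : Hist A E) (a : A) : ℝ :=
  ⨆ π : Policy A E, Vact γ r π ν h a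

/-- A history is consistent with `π` iff each of its actions is the one chosen by `π`. -/
def Consistent {A E : Type*} (π : Policy A E) (h : Hist A E) : Prop :=
  ∀ (k : ℕ) (hk : k < h.length), (h.get ⟨k, hk⟩).1 = π (h.take k)

/-- Auxiliary function for the dogmatic environment: `pre` is the consistent
prefix processed so far, the second argument is the rest of the history. -/
noncomputable def dogmaAux {A E : Type*} [Fintype E] (ξ : CCS A E) (π : Policy A E)
    (e0 : E) : Hist A E → Hist A E → ℝ
  | pre, [] => ξ.val pre
  | pre, (a, e) :: rest =>
    if a = π pre then dogmaAux ξ π e0 (pre ++ [(a, e)]) rest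
    else if e = e0 ∧ ∀ p ∈ rest, p.2 = e0 then ξ.val pre else 0

/-- The `π`-dogmatic environment for `ξ`: mimics `ξ` while the actions follow `π`;
from the first deviation on it deterministically emits `e0` and freezes the mass. -/
noncomputable def dogma {A E : Type*} [Fintype E] (ξ : CCS A E) (π : Policy A E)
    (e0 : E) (h : Hist A E) : ℝ :=
  dogmaAux ξ π e0 [] h

/-- A CCS has full support iff it is positive on every history. -/
def FullSupport {A E : Type*} [Fintype E] (ξ : CCS A E) : Prop :=
  ∀ h : Hist A E, 0 < ξ.val h

section Aux
variable {A E : Type*} [Fintype E]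

lemma extendH_nil (σ : Policy A E) (h : Hist A E) : extendH σ h [] = h := rfl
lemma extendH_cons (σ : Policy A E) (h : Hist A E) (e : E) (l : List E) :
    extendH σ h (e :: l) = extendH σ (h ++ [(σ h, e)]) l := rfl

/-- Structure of extended histories. -/
lemma extendH_structure (σ : Policy A E) :
    ∀ (l : List E) (h₀ : Hist A E), ∃ rest : Hist A E,
      extendH σ h₀ l = h₀ ++ rest ∧ rest.map Prod.snd = l := by
  intro l
  induction l with
  | nil => intro h₀; exact ⟨[], by simp [extendH_nil]⟩
  | cons e l ih =>
    intro h₀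
    obtain ⟨rest, h1, h2⟩ := ih (h₀ ++ [(σ h₀, e)])
    exact ⟨(σ h₀, e) :: rest, by simpa [extendH_cons] using h1, by simp [h2]⟩

/-- Sum over all percept continuations is bounded by the mass of the history. -/
lemma sum_extendH_le (μ : CCS A E) (σ : Policy A E) :
    ∀ (n : ℕ) (h : Hist A E),
      (∑ es : Fin n → E, μ.val (extendH σ h (List.ofFn es))) ≤ μ.val h := by
  intro n
  induction n with
  | zero =>
    intro h
    simp [extendH_nil]
  | succ n ih =>
    intro h
    have hre : (∑ es : Fin (n+1) → E, μ.val (extendH σ h (List.ofFn es)))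
        = ∑ p : E × (Fin n → E), μ.val (extendH σ (h ++ [(σ h, p.1)]) (List.ofFn p.2)) := by
      apply Fintype.sum_equiv (Fin.consEquiv fun _ => E).symm
      intro es
      congr 1
      rw [List.ofFn_succ, extendH_cons]
      rfl
    rw [hre, Fintype.sum_prod_type]
    calc (∑ e : E, ∑ es : Fin n → E, μ.val (extendH σ (h ++ [(σ h, e)]) (List.ofFn es)))
        ≤ ∑ e : E, μ.val (h ++ [(σ h, e)]) := Finset.sum_le_sum fun e _ => ih _
      _ ≤ μ.val h := μ.chrono h (σ h)

end Aux
set_option linter.unusedSectionVars false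
section Aux2
variable {A E : Type*} [Fintype E]

lemma consistent_snoc {π : Policy A E} {h : Hist A E} (hc : Consistent π h) (e : E) :
    Consistent π (h ++ [(π h, e)]) := by
  intro k hk
  have hk2 : k < h.length + 1 := by simpa using hk
  rcases lt_or_eq_of_le (Nat.lt_succ_iff.mp hk2) with hk' | hk'
  · have h1 : (h ++ [(π h, e)]).get ⟨k, hk⟩ = h.get ⟨k, hk'⟩ := by
      simp [List.getElem_append_left hk']
    have h2 : (h ++ [(π h, e)]).take k = h.take k := by
      rw [List.take_append_of_le_length (le_of_lt hk')]
    rw [h1, h2]; exact hc k hk'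
  · subst hk'
    have h1 : (h ++ [(π h, e)]).get ⟨h.length, hk⟩ = (π h, e) := by
      simp
    have h2 : (h ++ [(π h, e)]).take h.length = h := List.take_left
    rw [h1, h2]

lemma consistent_extendH {π : Policy A E} :
    ∀ (l : List E) {h : Hist A E}, Consistent π h → Consistent π (extendH π h l) := by
  intro l
  induction l with
  | nil => intro h hc; exact hc
  | cons e l ih => intro h hc; rw [extendH_cons]; exact ih (consistent_snoc hc e)

lemma dogmaAux_append (ξ : CCS A E) (π : Policy A E) (e0 : E) :
    ∀ (mid pre tail : Hist A E),
      (∀ (k : ℕ) (hk : k < mid.length), (mid.get ⟨k, hk⟩).1 = π (pre ++ mid.take k)) →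
      dogmaAux ξ π e0 pre (mid ++ tail) = dogmaAux ξ π e0 (pre ++ mid) tail := by
  intro mid
  induction mid with
  | nil => intro pre tail _; simp
  | cons p mid ih =>
    intro pre tail hc
    obtain ⟨a, e⟩ := p
    have h0 : a = π pre := by
      have := hc 0 (by simp)
      simpa using this
    rw [List.cons_append]
    show dogmaAux ξ π e0 pre ((a, e) :: (mid ++ tail)) = _
    rw [dogmaAux, if_pos h0]
    have := ih (pre ++ [(a, e)]) tail ?_
    · rw [this]; congr 1; simp
    · intro k hk
      have := hc (k + 1) (by simpa using Nat.succ_lt_succ hk)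
      simpa [List.take_succ_cons, List.append_assoc] using this

lemma dogma_of_consistent (ξ : CCS A E) (π : Policy A E) (e0 : E) {h : Hist A E}
    (hc : Consistent π h) : dogma ξ π e0 h = ξ.val h := by
  have := dogmaAux_append ξ π e0 h [] [] (by intro k hk; simpa using hc k hk)
  simpa [dogma, dogmaAux] using this

end Aux2
section Aux3
variable {A E : Type*} [Fintype E]

lemma summable_shift {γ : ℕ → ℝ} (hγs : Summable γ) (t : ℕ) :
    Summable (fun n => γ (t + n)) :=
  hγs.comp_injective (add_right_injective t)

lemma inner_sum_nonneg (μ : CCS A E) (σ : Policy A E) (r : E → ℝ)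
    (hr : ∀ e : E, 0 ≤ r e ∧ r e ≤ 1) (h : Hist A E) (n : ℕ) :
    0 ≤ ∑ es : Fin (n+1) → E, r (es (Fin.last n)) * μ.val (extendH σ h (List.ofFn es)) :=
  Finset.sum_nonneg fun es _ => mul_nonneg (hr _).1 (μ.nonneg _)

lemma inner_sum_le (μ : CCS A E) (σ : Policy A E) (r : E → ℝ)
    (hr : ∀ e : E, 0 ≤ r e ∧ r e ≤ 1) (h : Hist A E) (n : ℕ) :
    (∑ es : Fin (n+1) → E, r (es (Fin.last n)) * μ.val (extendH σ h (List.ofFn es)))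
      ≤ μ.val h := by
  calc (∑ es : Fin (n+1) → E, r (es (Fin.last n)) * μ.val (extendH σ h (List.ofFn es)))
      ≤ ∑ es : Fin (n+1) → E, μ.val (extendH σ h (List.ofFn es)) := by
        apply Finset.sum_le_sum
        intro es _
        exact mul_le_of_le_one_left (μ.nonneg _) (hr _).2
    _ ≤ μ.val h := sum_extendH_le μ σ (n+1) h

/-- tsum bound: if `0 ≤ S n ≤ C` then `∑' n, γ(t+n) * S n ≤ Gam γ t * C`. -/
lemma tsum_gamma_le {γ : ℕ → ℝ} (hγ0 : ∀ t, 0 ≤ γ t) (hγs : Summable γ) (t : ℕ)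
    {S : ℕ → ℝ} {C : ℝ} (hS0 : ∀ n, 0 ≤ S n) (hSC : ∀ n, S n ≤ C) :
    (∑' n : ℕ, γ (t + n) * S n) ≤ Gam γ t * C := by
  have hgsum : Summable (fun n => γ (t + n) * C) := (summable_shift hγs t).mul_right C
  have hfsum : Summable (fun n => γ (t + n) * S n) := by
    apply Summable.of_nonneg_of_le (fun n => mul_nonneg (hγ0 _) (hS0 n))
      (fun n => mul_le_mul_of_nonneg_left (hSC n) (hγ0 _)) hgsum
  calc (∑' n : ℕ, γ (t + n) * S n) ≤ ∑' n : ℕ, γ (t + n) * C :=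
        Summable.tsum_le_tsum (fun n => mul_le_mul_of_nonneg_left (hSC n) (hγ0 _)) hfsum hgsum
    _ = Gam γ t * C := by rw [tsum_mul_right]; rfl

lemma tsum_gamma_nonneg {γ : ℕ → ℝ} (hγ0 : ∀ t, 0 ≤ γ t) (t : ℕ)
    {S : ℕ → ℝ} (hS0 : ∀ n, 0 ≤ S n) :
    0 ≤ ∑' n : ℕ, γ (t + n) * S n :=
  tsum_nonneg fun n => mul_nonneg (hγ0 _) (hS0 n)

/-- Every value is at most 1. -/
lemma V_le_one {γ : ℕ → ℝ} (hγ0 : ∀ t, 0 ≤ γ t) (hγs : Summable γ)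
    {r : E → ℝ} (hr : ∀ e : E, 0 ≤ r e ∧ r e ≤ 1)
    (σ : Policy A E) (μ : CCS A E) (h : Hist A E) :
    V γ r σ μ h ≤ 1 := by
  rw [V]
  split_ifs with hif
  · obtain ⟨hG, hM⟩ := hif
    set t := h.length + 1
    have hbd : (∑' n : ℕ, γ (t + n) *
        ∑ es : Fin (n+1) → E, r (es (Fin.last n)) * μ.val (extendH σ h (List.ofFn es)))
        ≤ Gam γ t * μ.val h :=
      tsum_gamma_le hγ0 hγs t (inner_sum_nonneg μ σ r hr h) (inner_sum_le μ σ r hr h)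
    rw [div_mul_eq_mul_div, one_mul, div_le_one (by positivity)]
    exact hbd
  · norm_num

lemma V_nonneg {γ : ℕ → ℝ} (hγ0 : ∀ t, 0 ≤ γ t)
    {r : E → ℝ} (hr : ∀ e : E, 0 ≤ r e ∧ r e ≤ 1)
    (σ : Policy A E) (μ : CCS A E) (h : Hist A E) :
    0 ≤ V γ r σ μ h := by
  rw [V]
  split_ifs with hif
  · obtain ⟨hG, hM⟩ := hif
    have := tsum_gamma_nonneg (S := fun n =>
      ∑ es : Fin (n+1) → E, r (es (Fin.last n)) * μ.val (extendH σ h (List.ofFn es)))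
      hγ0 (h.length + 1) (inner_sum_nonneg μ σ r hr h)
    positivity
  · exact le_refl _

end Aux3
section Aux4
variable {A E : Type*} [Fintype E]

/-- After a deviation from `π`, any reward-weighted dogma mass vanishes. -/
lemma dev_term_zero {π : Policy A E} {h : Hist A E} (hc : Consistent π h)
    (ξ : CCS A E) (e0 : E) {σ : Policy A E} (hσ : σ h ≠ π h)
    {r : E → ℝ} (hr0 : r e0 = 0) (n : ℕ) (es : Fin (n+1) → E) :
    r (es (Fin.last n)) * dogma ξ π e0 (extendH σ h (List.ofFn es)) = 0 := by
  have hofn : List.ofFn es = es 0 :: List.ofFn (fun i : Fin n => es i.succ) :=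
    List.ofFn_succ
  rw [hofn, extendH_cons]
  obtain ⟨rest, hre, hmap⟩ :=
    extendH_structure σ (List.ofFn fun i : Fin n => es i.succ) (h ++ [(σ h, es 0)])
  rw [hre]
  have hass : (h ++ [(σ h, es 0)]) ++ rest = h ++ ((σ h, es 0) :: rest) := by simp
  rw [hass]
  have hd := dogmaAux_append ξ π e0 h [] ((σ h, es 0) :: rest)
    (by intro k hk; simpa using hc k hk)
  simp only [List.nil_append] at hd
  rw [dogma, hd]
  rw [dogmaAux, if_neg hσ]
  split_ifs with hcond
  · obtain ⟨h1, h2⟩ := hcond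
    have hmem : es (Fin.last n) ∈ List.ofFn es := List.mem_ofFn.mpr ⟨Fin.last n, rfl⟩
    rw [hofn] at hmem
    have : es (Fin.last n) = e0 := by
      rcases List.mem_cons.mp hmem with h3 | h3
      · rw [h3, h1]
      · rw [← hmap] at h3
        obtain ⟨p, hp, hps⟩ := List.mem_map.mp h3
        rw [← hps]; exact h2 p hp
    rw [this, hr0, zero_mul]
  · exact mul_zero _

end Aux4
section Aux5
variable {A E : Type*} [Fintype E]

/-- Along `π`, the mixture `ξ'` values the history exactly as `ξ` does. -/
lemma V_mix_eq {γ : ℕ → ℝ} {r : E → ℝ}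
    {ξ ν ξ' : CCS A E} {π : Policy A E} {e0 : E} {ε : ℝ} (hε0 : 0 < ε)
    (hν : ∀ g : Hist A E, ν.val g = dogma ξ π e0 g)
    (hξ' : ∀ g : Hist A E, ξ'.val g = (1 / 2) * ν.val g + (ε / 2) * ξ.val g)
    {h : Hist A E} (hcons : Consistent π h)
    (hΓ : 0 < Gam γ (h.length + 1)) (hpos : 0 < ξ.val h) :
    V γ r π ξ' h = V γ r π ξ h := by
  set c : ℝ := (1 + ε) / 2 with hcdef
  have hc : 0 < c := by positivity
  have hval : ∀ g : Hist A E, Consistent π g → ξ'.val g = c * ξ.val g := by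
    intro g hg
    rw [hξ', hν, dogma_of_consistent ξ π e0 hg, hcdef]; ring
  have hξ'h : ξ'.val h = c * ξ.val h := hval h hcons
  rw [V, V, if_pos ⟨hΓ, by rw [hξ'h]; positivity⟩, if_pos ⟨hΓ, hpos⟩]
  set t := h.length + 1
  have hnum : (∑' n : ℕ, γ (t + n) *
        ∑ es : Fin (n+1) → E, r (es (Fin.last n)) * ξ'.val (extendH π h (List.ofFn es)))
      = c * ∑' n : ℕ, γ (t + n) *
        ∑ es : Fin (n+1) → E, r (es (Fin.last n)) * ξ.val (extendH π h (List.ofFn es)) := by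
    rw [← tsum_mul_left]
    apply tsum_congr
    intro n
    have hcg : (∑ es : Fin (n+1) → E, r (es (Fin.last n)) * ξ'.val (extendH π h (List.ofFn es)))
        = c * ∑ es : Fin (n+1) → E, r (es (Fin.last n)) * ξ.val (extendH π h (List.ofFn es)) := by
      rw [Finset.mul_sum]
      apply Finset.sum_congr rfl
      intro es _
      rw [hval _ (consistent_extendH _ hcons)]; ring
    rw [hcg]
    ring
  rw [hnum, hξ'h]
  have h1 : Gam γ t ≠ 0 := ne_of_gt hΓ
  have h2 : ξ.val h ≠ 0 := ne_of_gt hpos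
  have h3 : c ≠ 0 := ne_of_gt hc
  field_simp

/-- Any deviating action has value at most `ε/(1+ε)` in the mixture. -/
lemma Vact_dev_le {γ : ℕ → ℝ} (hγ0 : ∀ t, 0 ≤ γ t) (hγs : Summable γ)
    {r : E → ℝ} (hr : ∀ e : E, 0 ≤ r e ∧ r e ≤ 1)
    {ξ ν ξ' : CCS A E} {π : Policy A E} {e0 : E} (hr0 : r e0 = 0)
    {ε : ℝ} (hε0 : 0 < ε)
    (hν : ∀ g : Hist A E, ν.val g = dogma ξ π e0 g)
    (hξ' : ∀ g : Hist A E, ξ'.val g = (1 / 2) * ν.val g + (ε / 2) * ξ.val g)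
    {h : Hist A E} (hcons : Consistent π h)
    (hΓ : 0 < Gam γ (h.length + 1)) (hpos : 0 < ξ.val h)
    {β : A} (hβ : β ≠ π h) (π' : Policy A E) :
    Vact γ r π' ξ' h β ≤ ε / (1 + ε) := by
  have hd : (0:ℝ) ≤ ε / (1 + ε) := by positivity
  rw [Vact, V]
  split_ifs with hif
  · obtain ⟨hG, hM⟩ := hif
    set σ : Policy A E := fun h' => if h' = h then β else π' h' with hσdef
    have hσh : σ h ≠ π h := by simp [hσdef, hβ]
    set t := h.length + 1
    set c : ℝ := (1 + ε) / 2 with hcdef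
    have hc : 0 < c := by positivity
    have hξ'h : ξ'.val h = c * ξ.val h := by
      rw [hξ', hν, dogma_of_consistent ξ π e0 hcons, hcdef]; ring
    have hterm : ∀ (n : ℕ) (es : Fin (n+1) → E),
        r (es (Fin.last n)) * ξ'.val (extendH σ h (List.ofFn es))
          = (ε / 2) * (r (es (Fin.last n)) * ξ.val (extendH σ h (List.ofFn es))) := by
      intro n es
      have hz : r (es (Fin.last n)) * ν.val (extendH σ h (List.ofFn es)) = 0 := by
        rw [hν]; exact dev_term_zero hcons ξ e0 hσh hr0 n es
      rw [hξ']
      linear_combination (1/2 : ℝ) * hz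
    have hnum : (∑' n : ℕ, γ (t + n) *
          ∑ es : Fin (n+1) → E, r (es (Fin.last n)) * ξ'.val (extendH σ h (List.ofFn es)))
        = ∑' n : ℕ, γ (t + n) * ((ε / 2) *
          ∑ es : Fin (n+1) → E, r (es (Fin.last n)) * ξ.val (extendH σ h (List.ofFn es))) := by
      apply tsum_congr
      intro n
      have hcg : (∑ es : Fin (n+1) → E, r (es (Fin.last n)) * ξ'.val (extendH σ h (List.ofFn es)))
          = (ε / 2) * ∑ es : Fin (n+1) → E, r (es (Fin.last n)) * ξ.val (extendH σ h (List.ofFn es)) := by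
        rw [Finset.mul_sum]
        exact Finset.sum_congr rfl fun es _ => hterm n es
      rw [hcg]
    rw [hnum]
    have hbd : (∑' n : ℕ, γ (t + n) * ((ε / 2) *
          ∑ es : Fin (n+1) → E, r (es (Fin.last n)) * ξ.val (extendH σ h (List.ofFn es))))
        ≤ Gam γ t * ((ε / 2) * ξ.val h) := by
      apply tsum_gamma_le hγ0 hγs t
      · intro n; exact mul_nonneg (by positivity) (inner_sum_nonneg ξ σ r hr h n)
      · intro n
        exact mul_le_mul_of_nonneg_left (inner_sum_le ξ σ r hr h n) (by positivity)
    calc 1 / (Gam γ t * ξ'.val h) * (∑' n : ℕ, γ (t + n) * ((ε / 2) *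
          ∑ es : Fin (n+1) → E, r (es (Fin.last n)) * ξ.val (extendH σ h (List.ofFn es))))
        ≤ 1 / (Gam γ t * ξ'.val h) * (Gam γ t * ((ε / 2) * ξ.val h)) := by
          apply mul_le_mul_of_nonneg_left hbd
          positivity
      _ = ε / (1 + ε) := by
          rw [hξ'h, hcdef]
          have h1 : Gam γ t ≠ 0 := ne_of_gt hG
          have h2 : ξ.val h ≠ 0 := ne_of_gt hpos
          have h3 : (1 + ε) ≠ 0 := by positivity
          field_simp
  · exact hd

end Aux5
/-- **Dogmatic prior (core construction).** With `ξ' = (1/2)·ν + (ε/2)·ξ` for the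
`π`-dogmatic `ν`, on any `π`-consistent history `h` with `V^π_ξ(h) > ε`,
the action `π(h)` is the unique `ξ'`-optimal action. -/
theorem dogmatic_prior {A E : Type*} [Fintype A] [Nonempty A] [Fintype E] [Nonempty E]
    (γ : ℕ → ℝ) (hγ0 : ∀ t, 0 ≤ γ t) (hγs : Summable γ)
    (r : E → ℝ) (hr : ∀ e : E, 0 ≤ r e ∧ r e ≤ 1)
    (ξ : CCS A E) (π : Policy A E) (e0 : E) (hr0 : r e0 = 0)
    (ε : ℝ) (hε0 : 0 < ε) (hε1 : ε ≤ 1)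
    (ν ξ' : CCS A E)
    (hν : ∀ h : Hist A E, ν.val h = dogma ξ π e0 h)
    (hξ' : ∀ h : Hist A E, ξ'.val h = (1 / 2) * ν.val h + (ε / 2) * ξ.val h)
    (h : Hist A E) (hcons : Consistent π h)
    (hΓ : 0 < Gam γ (h.length + 1)) (hpos : 0 < ξ.val h)
    (hV : ε < V γ r π ξ h) :
    ∀ β : A, β ≠ π h → VOptAct γ r ξ' h β < VOptAct γ r ξ' h (π h) := by
  intro β hβ
  have key1 : VOptAct γ r ξ' h β ≤ ε / (1 + ε) := by
    rw [VOptAct]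
    exact ciSup_le fun π' =>
      Vact_dev_le hγ0 hγs hr hr0 hε0 hν hξ' hcons hΓ hpos hβ π'
  have key2 : Vact γ r π ξ' h (π h) = V γ r π ξ h := by
    rw [Vact]
    have hpol : (fun h' => if h' = h then π h else π h') = π := by
      funext h'
      split_ifs with hh
      · rw [hh]
      · rfl
    rw [hpol]
    exact V_mix_eq hε0 hν hξ' hcons hΓ hpos
  have key3 : Vact γ r π ξ' h (π h) ≤ VOptAct γ r ξ' h (π h) := by
    rw [VOptAct]
    apply le_ciSup (f := fun π' => Vact γ r π' ξ' h (π h)) ?_ π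
    refine ⟨1, ?_⟩
    rintro x ⟨π', rfl⟩
    exact V_le_one hγ0 hγs hr _ ξ' h
  have hfrac : ε / (1 + ε) < ε := by
    rw [div_lt_iff₀ (by linarith)]
    nlinarith
  linarith
end

section
/- (Intelligence gap.) Assume Γ_1 > 0, A has at least two elements, and there are percepts e⁰, e¹ ∈ E with r(e⁰) = 0 and r(e¹) = 1. Fix α ∈ A and let ν be the CCS in which the first action decides everything: if a_1 = α then deterministically e_i = e¹ for all i, and if a_1 ≠ α then deterministically e_i = e⁰ for all i. Let ξ be any CCS and ξ' := 0.999·ν + 0.001·ξ. Then every policy π with π(ϵ) = α has Υ_{ξ'}(π) ≥ 0.999, every policy π with π(ϵ) ≠ α has Υ_{ξ'}(π) ≤ 0.001, and consequently no policy has Υ_{ξ'}(π) in the open interval (0.001, 0.999). -/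
open scoped Classical

/-- The environment in which the first action decides everything: if the first action
is `α`, it deterministically emits `eSame` forever; otherwise `eOther` forever. -/
noncomputable def firstEnv {A E : Type*} (α : A) (eSame eOther : E) : Hist A E → ℝ
  | [] => 1
  | (a, e) :: rest =>
    if a = α then (if e = eSame ∧ ∀ p ∈ rest, p.2 = eSame then 1 else 0)
    else (if e = eOther ∧ ∀ p ∈ rest, p.2 = eOther then 1 else 0)


section AuxIG
variable {A E : Type*} [Fintype E]

lemma extendH_map_snd (π : Policy A E) : ∀ (l : List E) (h : Hist A E),
    (extendH π h l).map Prod.snd = h.map Prod.snd ++ l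
  | [], h => by simp [extendH]
  | e :: es, h => by
    simp [extendH, extendH_map_snd π es]

lemma extendH_prefix (π : Policy A E) : ∀ (l : List E) (h : Hist A E),
    ∃ t, extendH π h l = h ++ t
  | [], h => ⟨[], by simp [extendH]⟩
  | e :: es, h => by
    obtain ⟨t, ht⟩ := extendH_prefix π es (h ++ [(π h, e)])
    exact ⟨(π h, e) :: t, by simpa [extendH] using ht⟩

lemma extendH_ofFn_cons (π : Policy A E) (n : ℕ) (es : Fin (n+1) → E) :
    ∃ t : Hist A E, extendH π [] (List.ofFn es) = (π [], es 0) :: t ∧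
      t.map Prod.snd = List.ofFn (fun i : Fin n => es i.succ) := by
  rw [List.ofFn_succ]
  obtain ⟨t, ht⟩ := extendH_prefix π (List.ofFn fun i => es i.succ) ([(π [], es 0)])
  refine ⟨t, ?_, ?_⟩
  · have : extendH π [] (es 0 :: List.ofFn fun i => es i.succ)
        = extendH π [(π [], es 0)] (List.ofFn fun i => es i.succ) := by
      simp [extendH]
    rw [this, ht]; rfl
  · have h2 := extendH_map_snd π (List.ofFn fun i => es i.succ) [(π [], es 0)]
    rw [ht] at h2
    simpa using h2

lemma firstEnv_extend (α : A) (e1 e0 : E) (π : Policy A E) (n : ℕ) (es : Fin (n+1) → E) :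
    firstEnv α e1 e0 (extendH π [] (List.ofFn es)) =
      if π [] = α then (if ∀ i, es i = e1 then (1:ℝ) else 0)
      else (if ∀ i, es i = e0 then (1:ℝ) else 0) := by
  obtain ⟨t, ht, hsnd⟩ := extendH_ofFn_cons π n es
  have hmem : ∀ c : E, (∀ p ∈ t, p.2 = c) ↔ ∀ i : Fin n, es i.succ = c := by
    intro c
    constructor
    · intro H i
      have : es i.succ ∈ t.map Prod.snd := by
        rw [hsnd]; exact List.mem_ofFn.2 ⟨i, rfl⟩
      obtain ⟨p, hp, hpe⟩ := List.mem_map.1 this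
      rw [← hpe]; exact H p hp
    · intro H p hp
      have : p.2 ∈ t.map Prod.snd := List.mem_map.2 ⟨p, hp, rfl⟩
      rw [hsnd] at this
      obtain ⟨i, hi⟩ := List.mem_ofFn.1 this
      rw [← hi]; exact H i
  have h1 : (es 0 = e1 ∧ ∀ p ∈ t, p.2 = e1) ↔ ∀ i, es i = e1 := by
    rw [hmem, Fin.forall_fin_succ]
  have h0 : (es 0 = e0 ∧ ∀ p ∈ t, p.2 = e0) ↔ ∀ i, es i = e0 := by
    rw [hmem, Fin.forall_fin_succ]
  rw [ht]
  show (if π [] = α then (if es 0 = e1 ∧ ∀ p ∈ t, p.2 = e1 then (1:ℝ) else 0)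
      else (if es 0 = e0 ∧ ∀ p ∈ t, p.2 = e0 then (1:ℝ) else 0)) = _
  by_cases hα : π [] = α
  · simp only [hα, if_true, if_congr h1 rfl rfl]
  · simp only [hα, if_false, if_congr h0 rfl rfl]

lemma sum_extend_le (μ : CCS A E) (π : Policy A E) :
    ∀ (n : ℕ) (h : Hist A E),
      (∑ es : Fin (n+1) → E, μ.val (extendH π h (List.ofFn es))) ≤ μ.val h
  | 0, h => by
    calc (∑ es : Fin 1 → E, μ.val (extendH π h (List.ofFn es)))
        = ∑ e : E, μ.val (h ++ [(π h, e)]) := by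
          apply Fintype.sum_equiv (Equiv.funUnique (Fin 1) E)
          intro es
          simp [extendH, List.ofFn_succ, Equiv.funUnique]
      _ ≤ μ.val h := μ.chrono h (π h)
  | n+1, h => by
    calc (∑ es : Fin (n+2) → E, μ.val (extendH π h (List.ofFn es)))
        = ∑ p : E × (Fin (n+1) → E),
            μ.val (extendH π (h ++ [(π h, p.1)]) (List.ofFn p.2)) := by
          apply Fintype.sum_equiv (Fin.consEquiv (fun _ : Fin (n+2) => E)).symm
          intro es
          rw [List.ofFn_succ]
          rfl
      _ = ∑ e : E, ∑ es : Fin (n+1) → E,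
            μ.val (extendH π (h ++ [(π h, e)]) (List.ofFn es)) := by
          rw [Fintype.sum_prod_type]
      _ ≤ ∑ e : E, μ.val (h ++ [(π h, e)]) := by
          apply Finset.sum_le_sum
          intro e _
          exact sum_extend_le μ π n (h ++ [(π h, e)])
      _ ≤ μ.val h := μ.chrono h (π h)

lemma sum_r_indicator (r : E → ℝ) (c : E) (n : ℕ) :
    (∑ es : Fin (n+1) → E, r (es (Fin.last n)) * (if ∀ i, es i = c then (1:ℝ) else 0))
      = r c := by
  have key : ∀ es : Fin (n+1) → E,
      r (es (Fin.last n)) * (if ∀ i, es i = c then (1:ℝ) else 0)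
        = if es = (fun _ => c) then r (es (Fin.last n)) else 0 := by
    intro es
    by_cases h : es = fun _ => c
    · subst h; simp
    · have h2 : ¬ ∀ i, es i = c := fun H => h (funext H)
      simp [h, h2]
  rw [Finset.sum_congr rfl (fun es _ => key es),
    Finset.sum_ite_eq' Finset.univ (fun _ => c) (fun es => r (es (Fin.last n)))]
  simp

end AuxIG

/-- **Intelligence gap.** With `ξ' = 0.999·ν + 0.001·ξ` where in `ν` the first action
decides between heaven and hell, intelligence scores avoid the interval `(0.001, 0.999)`. -/
theorem intelligence_gap {A E : Type*} [Fintype A] [Nonempty A] [Fintype E] [Nonempty E]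
    (γ : ℕ → ℝ) (hγ0 : ∀ t, 0 ≤ γ t) (hγs : Summable γ)
    (r : E → ℝ) (hr : ∀ e : E, 0 ≤ r e ∧ r e ≤ 1)
    (hΓ1 : 0 < Gam γ 1) (hA : ∃ a b : A, a ≠ b)
    (e0 e1 : E) (hr0 : r e0 = 0) (hr1 : r e1 = 1)
    (α : A) (ν ξ ξ' : CCS A E)
    (hν : ∀ h : Hist A E, ν.val h = firstEnv α e1 e0 h)
    (hξ' : ∀ h : Hist A E, ξ'.val h = 0.999 * ν.val h + 0.001 * ξ.val h) :
    (∀ π : Policy A E, π [] = α → (0.999 : ℝ) ≤ V γ r π ξ' []) ∧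
    (∀ π : Policy A E, π [] ≠ α → V γ r π ξ' [] ≤ (0.001 : ℝ)) ∧
    ¬ ∃ π : Policy A E,
        (0.001 : ℝ) < V γ r π ξ' [] ∧ V γ r π ξ' [] < (0.999 : ℝ) := by
  classical
  -- basic constants
  have hν0 : ν.val [] = 1 := by rw [hν]; rfl
  have hξ1 : ξ.val [] ≤ 1 := ξ.le_one []
  have hξnn : 0 ≤ ξ.val [] := ξ.nonneg []
  have hcval : ξ'.val [] = 0.999 + 0.001 * ξ.val [] := by
    rw [hξ' [], hν0]; ring
  have hcpos : 0 < ξ'.val [] := by rw [hcval]; nlinarith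
  have hcle1 : ξ'.val [] ≤ 1 := by rw [hcval]; nlinarith
  have hΓne : Gam γ 1 ≠ 0 := ne_of_gt hΓ1
  have hcne : ξ'.val [] ≠ 0 := ne_of_gt hcpos
  -- shifted summability
  have hγshift : Summable (fun n => γ (1 + n)) := by
    have := (summable_nat_add_iff 1).2 hγs
    apply this.congr
    intro n; rw [Nat.add_comm]
  -- the partial-sum functions
  set Sf : (CCS A E) → (Policy A E) → ℕ → ℝ := fun μ π n =>
    ∑ es : Fin (n+1) → E, r (es (Fin.last n)) * μ.val (extendH π [] (List.ofFn es))
    with hSf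
  have hSnn : ∀ (μ : CCS A E) (π : Policy A E) (n : ℕ), 0 ≤ Sf μ π n := by
    intro μ π n
    apply Finset.sum_nonneg
    intro es _
    exact mul_nonneg (hr _).1 (μ.nonneg _)
  have hSle : ∀ (μ : CCS A E) (π : Policy A E) (n : ℕ), Sf μ π n ≤ μ.val [] := by
    intro μ π n
    calc Sf μ π n ≤ ∑ es : Fin (n+1) → E, μ.val (extendH π [] (List.ofFn es)) := by
          apply Finset.sum_le_sum
          intro es _
          exact mul_le_of_le_one_left (μ.nonneg _) (hr _).2
      _ ≤ μ.val [] := sum_extend_le μ π n []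
  have hSsumm : ∀ (μ : CCS A E) (π : Policy A E),
      Summable (fun n => γ (1 + n) * Sf μ π n) := by
    intro μ π
    apply Summable.of_nonneg_of_le
      (fun n => mul_nonneg (hγ0 _) (hSnn μ π n))
      (fun n => ?_) hγshift
    calc γ (1 + n) * Sf μ π n ≤ γ (1 + n) * 1 :=
          mul_le_mul_of_nonneg_left (le_trans (hSle μ π n) (μ.le_one [])) (hγ0 _)
      _ = γ (1 + n) := mul_one _
  -- V at the empty history
  have hVeq : ∀ π : Policy A E, V γ r π ξ' [] =
      (1 / (Gam γ 1 * ξ'.val [])) * ∑' n : ℕ, γ (1 + n) * Sf ξ' π n := by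
    intro π
    rw [V, if_pos]
    · simp only [List.length_nil, Nat.zero_add, hSf]
    · constructor
      · simpa using hΓ1
      · exact hcpos
  -- the ν-part of the sum
  have hSν : ∀ (π : Policy A E) (n : ℕ),
      Sf ν π n = if π [] = α then (1:ℝ) else 0 := by
    intro π n
    have step : Sf ν π n = ∑ es : Fin (n+1) → E, r (es (Fin.last n)) *
        (if π [] = α then (if ∀ i, es i = e1 then (1:ℝ) else 0)
          else (if ∀ i, es i = e0 then (1:ℝ) else 0)) := by
      apply Finset.sum_congr rfl
      intro es _
      rw [hν, firstEnv_extend]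
    by_cases hα : π [] = α
    · rw [step]
      simp only [hα, if_true]
      rw [sum_r_indicator r e1 n, hr1]
    · rw [step]
      simp only [hα, if_false]
      rw [sum_r_indicator r e0 n, hr0]
  -- splitting S for ξ'
  have hsplit : ∀ (π : Policy A E) (n : ℕ),
      Sf ξ' π n = 0.999 * Sf ν π n + 0.001 * Sf ξ π n := by
    intro π n
    simp only [hSf]
    rw [Finset.mul_sum, Finset.mul_sum, ← Finset.sum_add_distrib]
    apply Finset.sum_congr rfl
    intro es _
    rw [hξ']
    ring
  -- First claim: π [] = α ⇒ V ≥ 0.999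
  have claim1 : ∀ π : Policy A E, π [] = α → (0.999 : ℝ) ≤ V γ r π ξ' [] := by
    intro π hα
    have hterm : ∀ n : ℕ, 0.999 * γ (1 + n) ≤ γ (1 + n) * Sf ξ' π n := by
      intro n
      have : (0.999 : ℝ) ≤ Sf ξ' π n := by
        rw [hsplit π n, hSν π n, if_pos hα]
        nlinarith [hSnn ξ π n]
      calc (0.999 : ℝ) * γ (1 + n) = γ (1 + n) * 0.999 := by ring
        _ ≤ γ (1 + n) * Sf ξ' π n := mul_le_mul_of_nonneg_left this (hγ0 _)
    have htsum : 0.999 * Gam γ 1 ≤ ∑' n : ℕ, γ (1 + n) * Sf ξ' π n := by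
      have := Summable.tsum_le_tsum hterm (hγshift.mul_left 0.999) (hSsumm ξ' π)
      rw [tsum_mul_left] at this
      exact this
    rw [hVeq π]
    have hpos : (0:ℝ) < 1 / (Gam γ 1 * ξ'.val []) :=
      div_pos one_pos (mul_pos hΓ1 hcpos)
    calc (0.999 : ℝ) ≤ 0.999 / ξ'.val [] := by
          rw [le_div_iff₀ hcpos]
          nlinarith
      _ = (1 / (Gam γ 1 * ξ'.val [])) * (0.999 * Gam γ 1) := by
          field_simp
      _ ≤ (1 / (Gam γ 1 * ξ'.val [])) * ∑' n : ℕ, γ (1 + n) * Sf ξ' π n :=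
          mul_le_mul_of_nonneg_left htsum (le_of_lt hpos)
  -- Second claim: π [] ≠ α ⇒ V ≤ 0.001
  have claim2 : ∀ π : Policy A E, π [] ≠ α → V γ r π ξ' [] ≤ (0.001 : ℝ) := by
    intro π hα
    have hterm : ∀ n : ℕ, γ (1 + n) * Sf ξ' π n ≤ (0.001 * ξ.val []) * γ (1 + n) := by
      intro n
      have : Sf ξ' π n ≤ 0.001 * ξ.val [] := by
        rw [hsplit π n, hSν π n, if_neg hα]
        nlinarith [hSle ξ π n]
      calc γ (1 + n) * Sf ξ' π n ≤ γ (1 + n) * (0.001 * ξ.val []) :=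
            mul_le_mul_of_nonneg_left this (hγ0 _)
        _ = (0.001 * ξ.val []) * γ (1 + n) := by ring
    have htsum : (∑' n : ℕ, γ (1 + n) * Sf ξ' π n) ≤ (0.001 * ξ.val []) * Gam γ 1 := by
      have := Summable.tsum_le_tsum hterm (hSsumm ξ' π) (hγshift.mul_left (0.001 * ξ.val []))
      rw [tsum_mul_left] at this
      exact this
    rw [hVeq π]
    have hpos : (0:ℝ) < 1 / (Gam γ 1 * ξ'.val []) :=
      div_pos one_pos (mul_pos hΓ1 hcpos)
    calc (1 / (Gam γ 1 * ξ'.val [])) * ∑' n : ℕ, γ (1 + n) * Sf ξ' π n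
        ≤ (1 / (Gam γ 1 * ξ'.val [])) * ((0.001 * ξ.val []) * Gam γ 1) :=
          mul_le_mul_of_nonneg_left htsum (le_of_lt hpos)
      _ = (0.001 * ξ.val []) / ξ'.val [] := by
          field_simp
      _ ≤ (0.001 : ℝ) := by
          rw [div_le_iff₀ hcpos, hcval]
          nlinarith
  refine ⟨claim1, claim2, ?_⟩
  rintro ⟨π, hlo, hhi⟩
  by_cases hα : π [] = α
  · exact absurd hhi (not_lt.2 (claim1 π hα))
  · exact absurd hlo (not_lt.2 (claim2 π hα))
end
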